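/- For any d ≥ 3, the pseudo-Boolean function f : P([d]) → ℝ, f(α) := max(|α|, 1), is fully 2-increasing but not fully 3-increasing. -/

import Mathlib

open Finset

/-- Discrete difference `(Δ_β f)(γ) = Σ_{β' ⊆ β} (−1)^{|β|−|β'|} f(γ ∪ β')` of a
pseudo-Boolean function. -/
def pbDiff {d : ℕ} (f : Finset (Fin d) → ℝ) (β γ : Finset (Fin d)) : ℝ :=
  ∑ β' ∈ β.powerset, (-1 : ℝ) ^ (β.card - β'.card) * f (γ ∪ β')

/-- A pseudo-Boolean function is fully `k`-increasing. -/
def PBFullyInc {d : ℕ} (k : ℕ) (f : Finset (Fin d) → ℝ) : Prop :=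
  ∀ β : Finset (Fin d), 1 ≤ β.card → β.card ≤ k →
    ∀ γ : Finset (Fin d), Disjoint γ β → 0 ≤ pbDiff f β γ

lemma pbDiff_eq {d : ℕ} (g : ℕ → ℝ) (β γ : Finset (Fin d)) (h : Disjoint γ β) :
    pbDiff (fun α => g α.card) β γ =
      ∑ j ∈ Finset.range (β.card + 1),
        (-1:ℝ) ^ (β.card - j) * (β.card.choose j) * g (γ.card + j) := by
  rw [pbDiff, Finset.sum_powerset]
  refine Finset.sum_congr rfl fun j hj => ?_
  have : ∀ t ∈ β.powersetCard j,
      (-1:ℝ) ^ (β.card - t.card) * g ((γ ∪ t).card)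
        = (-1:ℝ) ^ (β.card - j) * g (γ.card + j) := by
    intro t ht
    rw [Finset.mem_powersetCard] at ht
    rw [Finset.card_union_of_disjoint (h.mono_right ht.1), ht.2]
  rw [Finset.sum_congr rfl this, Finset.sum_const, Finset.card_powersetCard,
    nsmul_eq_mul]
  ring

/-- Example 1: for `d ≥ 3`, the pseudo-Boolean function `f(α) = max(|α|, 1)` is fully
`2`-increasing but not fully `3`-increasing. -/
theorem card_vee_one_fully_two_not_three (d : ℕ) (hd : 3 ≤ d) :
    PBFullyInc 2 (fun α : Finset (Fin d) => max (α.card : ℝ) 1) ∧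
    ¬ PBFullyInc 3 (fun α : Finset (Fin d) => max (α.card : ℝ) 1) := by
  constructor
  · intro β h1 h2 γ hγβ
    rw [pbDiff_eq (fun n => max (n:ℝ) 1) β γ hγβ]
    have hc : β.card = 1 ∨ β.card = 2 := by omega
    set c := γ.card with hcdef
    rcases hc with hc | hc <;> rw [hc] <;>
      simp only [Finset.sum_range_succ, Finset.sum_range_zero] <;>
      rcases Nat.eq_zero_or_pos c with h0 | h0
    · rw [h0]; norm_num
    · have hc1 : (1:ℝ) ≤ (c:ℝ) := by exact_mod_cast h0
      push_cast
      simp only [add_zero]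
      rw [max_eq_left (by linarith : (1:ℝ) ≤ (c:ℝ)),
        max_eq_left (by linarith : (1:ℝ) ≤ (c:ℝ)+1)]
      norm_num
    · rw [h0]; norm_num
    · have hc1 : (1:ℝ) ≤ (c:ℝ) := by exact_mod_cast h0
      push_cast
      simp only [add_zero]
      rw [max_eq_left (by linarith : (1:ℝ) ≤ (c:ℝ)),
        max_eq_left (by linarith : (1:ℝ) ≤ (c:ℝ)+1),
        max_eq_left (by linarith : (1:ℝ) ≤ (c:ℝ)+2)]
      norm_num
      linarith
  · intro h
    set β : Finset (Fin d) := {⟨0, by omega⟩, ⟨1, by omega⟩, ⟨2, by omega⟩} with hβ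
    have hcard : β.card = 3 := by
      rw [hβ, Finset.card_insert_of_notMem, Finset.card_insert_of_notMem,
        Finset.card_singleton]
      · simp [Fin.ext_iff]
      · simp [Fin.ext_iff]
    have := h β (by omega) (by omega) ∅ (Finset.disjoint_empty_left β)
    rw [pbDiff_eq (fun n => max (n:ℝ) 1) β ∅ (Finset.disjoint_empty_left β),
      hcard, Finset.card_empty] at this
    simp only [Finset.sum_range_succ, Finset.sum_range_zero] at this
    norm_num at this
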